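/- Let I be a proper free ideal in a subring A(X) of F(X) containing all constant functions, and let p ∈ X. Then either there exists a nonzero ideal J ⊆ I with p ∈ ⋂_{g∈J} Z(g), or X is a disjoint union of two proper zero-sets of functions in A(X). -/

import Mathlib

/-- for a proper free ideal `I` of `A(X)` (containing constants) and `p ∈ X`,
either there is a nonzero ideal `J ⊆ I` with `p ∈ ⋂_{g∈J} Z(g)`, or `X` is the disjoint
union of two proper zero-sets. -/
theorem stmt_2 {X : Type*} [TopologicalSpace X] [Nonempty X]
    (A : Subring (X → ℝ)) (hconst : ∀ r : ℝ, (fun _ : X => r) ∈ A)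
    (I : Ideal A) (hI : I ≠ ⊤)
    (hfree : (⋂ f ∈ I, {x | (f : ↥A).1 x = 0}) = ∅) (p : X) :
    (∃ J : Ideal A, J ≠ ⊥ ∧ J ≤ I ∧ ∀ g ∈ J, (g : ↥A).1 p = 0) ∨
    (∃ f g : A, {x | f.1 x = 0} ∪ {x | g.1 x = 0} = Set.univ ∧
      {x | f.1 x = 0} ∩ {x | g.1 x = 0} = ∅ ∧
      {x | f.1 x = 0} ≠ ∅ ∧ {x | f.1 x = 0} ≠ Set.univ ∧
      {x | g.1 x = 0} ≠ ∅ ∧ {x | g.1 x = 0} ≠ Set.univ) := by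
  classical
  left
  set ev : ↥A →+* ℝ := (Pi.evalRingHom (fun _ : X => ℝ) p).comp A.subtype with hev
  refine ⟨I ⊓ RingHom.ker ev, ?_, inf_le_left, ?_⟩
  · intro hJ
    have hp : p ∉ (⋂ f ∈ I, {x | (f : ↥A).1 x = 0}) := by
      rw [hfree]; exact Set.notMem_empty p
    simp only [Set.mem_iInter, Set.mem_setOf_eq, not_forall] at hp
    obtain ⟨f, hfI, hfp⟩ := hp
    -- every element of I is a constant multiple of f
    have key : ∀ g ∈ I, ∀ x, (g : ↥A).1 x = (g.1 p / f.1 p) * f.1 x := by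
      intro g hg x
      set c : ↥A := ⟨fun _ => g.1 p / f.1 p, hconst _⟩ with hc
      have hmem : g - c * f ∈ I ⊓ RingHom.ker ev := by
        constructor
        · exact I.sub_mem hg (I.mul_mem_left c hfI)
        · simp only [RingHom.mem_ker, hev, RingHom.comp_apply, Subring.coe_subtype,
            map_sub, map_mul]
          show g.1 p - (c * f).1 p = 0
          have : (c * f).1 p = (g.1 p / f.1 p) * f.1 p := rfl
          rw [this]
          field_simp
          ring
      rw [hJ, Ideal.mem_bot, sub_eq_zero] at hmem
      have := congrArg (fun t => (t : ↥A).1 x) hmem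
      simpa using this
    -- f is nowhere zero
    have hfz : ∀ x, f.1 x ≠ 0 := by
      intro x hx
      have hx' : x ∉ (⋂ g ∈ I, {y | (g : ↥A).1 y = 0}) := by
        rw [hfree]; exact Set.notMem_empty x
      simp only [Set.mem_iInter, Set.mem_setOf_eq, not_forall] at hx'
      obtain ⟨g, hgI, hgx⟩ := hx'
      exact hgx (by rw [key g hgI x, hx, mul_zero])
    -- every element of A is constant
    have hAconst : ∀ h : ↥A, ∀ x, h.1 x = h.1 p := by
      intro h x
      have hg : h * f ∈ I := I.mul_mem_left h hfI
      have h1 : h.1 x * f.1 x = (h.1 p * f.1 p / f.1 p) * f.1 x := key (h * f) hg x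
      rw [mul_div_assoc, div_self hfp, mul_one] at h1
      exact mul_right_cancel₀ (hfz x) h1
    -- hence 1 ∈ I
    have hone : (1 : ↥A) ∈ I := by
      have hcf : (⟨fun _ => 1 / f.1 p, hconst _⟩ : ↥A) * f = 1 := by
        apply Subtype.ext
        funext x
        show (1 / f.1 p) * f.1 x = 1
        rw [hAconst f x]
        field_simp
      have := I.mul_mem_left (⟨fun _ => 1 / f.1 p, hconst _⟩ : ↥A) hfI
      rwa [hcf] at this
    exact hI ((Ideal.eq_top_iff_one I).mpr hone)
  · intro g hg
    exact hg.2
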